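/- Let u_n be the sequence defined by u_{-1} = u_0 = 1 and u_n = u_{n-1} - t·u_{n-2} for a real parameter t. If t = 1/(4cos²(π/(d+2))), then u_i > 0 for 1 ≤ i ≤ d-1 and u_d = 0. Moreover with this t, the quantity t^{d-1}·u_{d-1}/u_{d-2}² equals 1/(2^{d+2} cos^{d+2}(π/(d+2))). -/

import Mathlib

open Real

/-- Let `d ≥ 2` and let `(u_n)_{n ≥ -1}` be the sequence with `u_{-1} = u_0 = 1` and
`u_n = u_{n-1} - t·u_{n-2}` (so `u_n = F^{(n)}(t, t, ..., t)`), where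
`t = 1/(4cos²(π/(d+2)))`. Then `u_i > 0` for `1 ≤ i ≤ d-1`, `u_d = 0`, and
`t^{d-1}·u_{d-1}/u_{d-2}² = 1/(2^{d+2} cos^{d+2}(π/(d+2)))`. -/
theorem equal_parameter_value (d : ℕ) (hd : 2 ≤ d) (t : ℝ)
    (ht : t = 1 / (4 * Real.cos (π / (d + 2)) ^ 2))
    (u : ℤ → ℝ)
    (hm : u (-1) = 1) (h0 : u 0 = 1)
    (hrec : ∀ n : ℤ, 1 ≤ n → u n = u (n - 1) - t * u (n - 2)) :
    (∀ i : ℤ, 1 ≤ i → i ≤ (d : ℤ) - 1 → 0 < u i) ∧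
    u d = 0 ∧
    t ^ (d - 1) * u ((d : ℤ) - 1) / (u ((d : ℤ) - 2)) ^ 2 =
      1 / (2 ^ (d + 2) * Real.cos (π / (d + 2)) ^ (d + 2)) := by
  have hdR : (2:ℝ) ≤ (d:ℝ) := by exact_mod_cast hd
  have hd2 : (0:ℝ) < (d:ℝ) + 2 := by positivity
  set θ : ℝ := π / ((d:ℝ) + 2) with hθ
  have hθpos : 0 < θ := div_pos pi_pos hd2
  have hθlt : θ < π / 2 := by
    rw [hθ, div_lt_div_iff₀ hd2 two_pos]
    nlinarith [pi_pos]
  have hcos : 0 < Real.cos θ := Real.cos_pos_of_mem_Ioo ⟨by linarith, hθlt⟩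
  set c : ℝ := 2 * Real.cos θ with hcdef
  have hc : 0 < c := by positivity
  have hcne : c ≠ 0 := ne_of_gt hc
  set s : ℝ := Real.sin θ with hsdef
  have hs : 0 < s := Real.sin_pos_of_pos_of_lt_pi hθpos (by linarith [pi_pos])
  have hsne : s ≠ 0 := ne_of_gt hs
  have ht' : t = 1 / c ^ 2 := by rw [ht, hcdef]; ring_nf
  clear_value c s
  set f : ℤ → ℝ := fun n => Real.sin (((n:ℝ) + 2) * θ) / (c ^ (n + 1) * s) with hfdef
  have hfrec : ∀ n : ℤ, f n = f (n - 1) - t * f (n - 2) := by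
    intro n
    have key : Real.sin (((n:ℝ) + 2) * θ) + Real.sin ((n:ℝ) * θ)
        = 2 * Real.sin (((n:ℝ) + 1) * θ) * Real.cos θ := by
      have e1 : ((n:ℝ) + 2) * θ = ((n:ℝ) + 1) * θ + θ := by ring
      have e2 : (n:ℝ) * θ = ((n:ℝ) + 1) * θ - θ := by ring
      rw [e1, e2, Real.sin_add, Real.sin_sub]; ring
    have key2 : Real.sin (((n:ℝ) + 2) * θ)
        = c * Real.sin (((n:ℝ) + 1) * θ) - Real.sin ((n:ℝ) * θ) := by
      rw [hcdef]; linarith [key]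
    have e3 : c ^ (n + 1) = c ^ (n - 1) * c * c := by
      rw [show n + 1 = (n - 1) + 1 + 1 by ring, zpow_add_one₀ hcne, zpow_add_one₀ hcne]
    have e4 : c ^ ((n - 1) + 1) = c ^ (n - 1) * c := by
      rw [zpow_add_one₀ hcne]
    have e5 : c ^ ((n - 2) + 1) = c ^ (n - 1) := by
      rw [show (n - 2) + 1 = n - 1 by ring]
    have a1 : ((n - 1 : ℤ) : ℝ) + 2 = (n:ℝ) + 1 := by push_cast; ring
    have a2 : ((n - 2 : ℤ) : ℝ) + 2 = (n:ℝ) := by push_cast; ring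
    have hp : c ^ (n - 1) ≠ 0 := zpow_ne_zero _ hcne
    simp only [hfdef]
    rw [a1, a2, key2, e3, e4, e5, ht']
    field_simp
  have hu0 : ∀ m : ℕ, u ((m:ℤ) - 1) = f ((m:ℤ) - 1) := by
    intro m
    induction m using Nat.strong_induction_on with
    | _ m ih =>
      match m with
      | 0 =>
        simp only [hfdef]
        norm_num [hm]
        rw [← hsdef, div_self hsne]
      | 1 =>
        simp only [hfdef]
        norm_num [h0]
        rw [Real.sin_two_mul, ← hsdef, hcdef]
        field_simp
      | (m + 2) =>
        have h1 := ih (m + 1) (by omega)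
        have h2 := ih m (by omega)
        rw [show ((m+1:ℕ):ℤ) - 1 = (m:ℤ) by push_cast; ring] at h1
        have h3 := hrec ((m:ℤ) + 1) (by omega)
        have h4 := hfrec ((m:ℤ) + 1)
        rw [show (m:ℤ) + 1 - 1 = (m:ℤ) by ring, show (m:ℤ) + 1 - 2 = (m:ℤ) - 1 by ring] at h3 h4
        rw [show ((m+2:ℕ):ℤ) - 1 = (m:ℤ) + 1 by push_cast; ring, h3, h4, h1, h2]
  have hu : ∀ m : ℕ, u (m:ℤ) = f (m:ℤ) := by
    intro m
    have := hu0 (m + 1)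
    rw [show ((m+1:ℕ):ℤ) - 1 = (m:ℤ) by push_cast; ring] at this
    exact this
  refine ⟨?_, ?_, ?_⟩
  · intro i hi1 hi2
    lift i to ℕ using (by omega : (0:ℤ) ≤ i)
    rw [hu i]
    simp only [hfdef]
    apply div_pos
    · apply Real.sin_pos_of_pos_of_lt_pi
      · have : (0:ℝ) < ((i:ℤ):ℝ) + 2 := by positivity
        exact mul_pos this hθpos
      · have hiR : (((i:ℤ)):ℝ) + 2 < (d:ℝ) + 2 := by
          have : (i:ℤ) + 2 < (d:ℤ) + 2 := by omega
          exact_mod_cast this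
        rw [hθ, mul_div_assoc', div_lt_iff₀ hd2]
        nlinarith [pi_pos]
    · exact mul_pos (zpow_pos hc _) hs
  · rw [hu d]
    simp only [hfdef]
    have harg : (((d:ℕ):ℤ):ℝ) + 2 = (d:ℝ) + 2 := by push_cast; ring
    have : ((((d:ℕ):ℤ):ℝ) + 2) * θ = π := by rw [harg, hθ]; field_simp
    rw [this, Real.sin_pi, zero_div]
  · obtain ⟨e, rfl⟩ : ∃ e, d = e + 2 := ⟨d - 2, by omega⟩
    have hπe : ((e:ℝ) + 4) * θ = π := by
      rw [hθ]; push_cast; field_simp; ring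
    have hv1 : u ((((e+2:ℕ)):ℤ) - 1) = 1 / c ^ (e + 2) := by
      have h := hu (e + 1)
      rw [show ((((e+2:ℕ)):ℤ) - 1) = ((e+1:ℕ):ℤ) by push_cast; ring, h]
      simp only [hfdef]
      have harg : ((((e+1:ℕ)):ℤ):ℝ) + 2 = (e:ℝ) + 3 := by push_cast; ring
      have harg2 : ((e:ℝ) + 3) * θ = π - θ := by linear_combination hπe
      rw [harg, harg2, Real.sin_pi_sub, ← hsdef]
      rw [show ((e+1:ℕ):ℤ) + 1 = ((e+2:ℕ):ℤ) by push_cast; ring, zpow_natCast]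
      field_simp
    have hv2 : u ((((e+2:ℕ)):ℤ) - 2) = c / c ^ (e + 1) := by
      have h := hu e
      rw [show ((((e+2:ℕ)):ℤ) - 2) = ((e:ℕ):ℤ) by push_cast; ring, h]
      simp only [hfdef]
      have harg2 : (((e:ℕ):ℤ):ℝ) + 2 = (e:ℝ) + 2 := by push_cast; ring
      have harg3 : ((e:ℝ) + 2) * θ = π - 2 * θ := by linear_combination hπe
      rw [harg2, harg3, Real.sin_pi_sub, Real.sin_two_mul, ← hsdef]
      rw [show ((e:ℕ):ℤ) + 1 = ((e+1:ℕ):ℤ) by push_cast; ring, zpow_natCast]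
      rw [hcdef]
      field_simp
    rw [hv1, hv2, ht']
    have hR : (2:ℝ) ^ (e + 2 + 2) * Real.cos θ ^ (e + 2 + 2) = c ^ (e + 4) := by
      rw [hcdef, mul_pow]
    rw [show e + 2 - 1 = e + 1 from rfl, hR]
    field_simp
    rw [one_div, inv_pow, ← pow_mul, ← pow_mul, mul_comm 2 (e+1), inv_mul_cancel₀ (pow_ne_zero _ hcne), one_mul, ← pow_add]
    ring
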